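/- For c > 0, β < 1, and β < α ≤ 2, the convex extended logistic loss f(θ) = ln_{2-α,c}(c + exp_{2-β,c}(θ)) is strictly convex on its domain {θ : θ < c^{β-1}/(1-β)}, with second derivative f''(θ) = [(α-β) + (2-β)·c/E(θ)]·E(θ)^{4-2β}/(c + E(θ))^{3-α} > 0, where E(θ) = exp_{2-β,c}(θ) = (c^{β-1} + (β-1)θ)^{1/(β-1)} > 0. -/

import Mathlib

private lemma stmt_19_aux (α β c e : ℝ) (hc : 0 < c) (he : 0 < e) :
    (α - β + (2 - β) * c / e) * e ^ (4 - 2 * β) / (c + e) ^ (3 - α)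
      = e ^ (2 - β) * (α - 2) * (c + e) ^ (α - 2 - 1) * e ^ (2 - β)
        + (c + e) ^ (α - 2) * (e ^ (2 - β) * (2 - β) * e ^ (2 - β - 1)) := by
  have hs : (0:ℝ) < c + e := by linarith
  have r1 : e ^ (4 - 2 * β) = e ^ (2 - β) * e ^ (2 - β) := by
    rw [← Real.rpow_add he]; congr 1; ring
  have r2 : e ^ (2 - β - 1) = e ^ (2 - β) / e := by
    rw [Real.rpow_sub he, Real.rpow_one]
  have r3 : (c + e) ^ (α - 2 - 1) = (c + e) ^ (α - 2) / (c + e) := by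
    rw [Real.rpow_sub hs, Real.rpow_one]
  have r4 : (c + e) ^ (3 - α) = (c + e) / (c + e) ^ (α - 2) := by
    rw [show (3:ℝ) - α = 1 - (α - 2) by ring, Real.rpow_sub hs, Real.rpow_one]
  rw [r1, r2, r3, r4]
  have ha : e ^ (2 - β) ≠ 0 := ne_of_gt (Real.rpow_pos_of_pos he _)
  have hA : (c + e) ^ (α - 2) ≠ 0 := ne_of_gt (Real.rpow_pos_of_pos hs _)
  field_simp
  ring

/-- For `c > 0`, `β < 1`, `β < α ≤ 2`, the convex extended logistic loss
`f(θ) = ln_{2-α,c}(c + exp_{2-β,c}(θ))`, where `exp_{2-β,c}(θ) = (c^{β-1}+(β-1)θ)^{1/(β-1)}`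
and `ln_{2-α,c}(x) = (x^{α-1}-c^{α-1})/(α-1)` (`= log(x/c)` if `α = 1`), is strictly convex
on `{θ | θ < c^{β-1}/(1-β)}`, where `E(θ) = exp_{2-β,c}(θ) > 0` and the second derivative
is `f''(θ) = [(α-β) + (2-β)c/E(θ)]·E(θ)^{4-2β}/(c+E(θ))^{3-α} > 0`. -/
theorem stmt_19 (α β c : ℝ) (hc : 0 < c) (hβ : β < 1) (hαβ : β < α) (hα : α ≤ 2)
    (E f : ℝ → ℝ)
    (hE : ∀ θ, E θ = (c ^ (β - 1) + (β - 1) * θ) ^ (1 / (β - 1)))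
    (hf : ∀ θ, f θ = if α = 1 then Real.log ((c + E θ) / c)
      else ((c + E θ) ^ (α - 1) - c ^ (α - 1)) / (α - 1)) :
    StrictConvexOn ℝ (Set.Iio (c ^ (β - 1) / (1 - β))) f ∧
    ∀ θ < c ^ (β - 1) / (1 - β),
      0 < E θ ∧
      iteratedDeriv 2 f θ
        = ((α - β) + (2 - β) * c / E θ) * (E θ) ^ (4 - 2 * β) / (c + E θ) ^ (3 - α) ∧
      0 < ((α - β) + (2 - β) * c / E θ) * (E θ) ^ (4 - 2 * β) / (c + E θ) ^ (3 - α) := by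
  have h1β : (0:ℝ) < 1 - β := by linarith
  have hβ1 : β - 1 ≠ 0 := by linarith
  set D := c ^ (β - 1) / (1 - β) with hD
  -- positivity of the base
  have hu : ∀ θ ∈ Set.Iio D, 0 < c ^ (β - 1) + (β - 1) * θ := by
    intro θ hθ
    rw [Set.mem_Iio, hD, lt_div_iff₀ h1β] at hθ
    nlinarith
  have hEpos : ∀ θ ∈ Set.Iio D, 0 < E θ := by
    intro θ hθ
    rw [hE θ]
    exact Real.rpow_pos_of_pos (hu θ hθ) _
  have hsum : ∀ θ ∈ Set.Iio D, 0 < c + E θ := fun θ hθ => by linarith [hEpos θ hθ]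
  -- derivative of E
  have hEderiv : ∀ θ ∈ Set.Iio D, HasDerivAt E ((E θ) ^ (2 - β)) θ := by
    intro θ hθ
    have hu' : HasDerivAt (fun t => c ^ (β - 1) + (β - 1) * t) (β - 1) θ := by
      simpa using ((hasDerivAt_id θ).const_mul (β - 1)).const_add (c ^ (β - 1))
    have h := hu'.rpow_const (p := 1 / (β - 1)) (Or.inl (ne_of_gt (hu θ hθ)))
    have hEfun : E = fun t => (c ^ (β - 1) + (β - 1) * t) ^ (1 / (β - 1)) := funext hE
    rw [hEfun]
    convert h using 1
    have hval : E θ ^ (2 - β)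
        = (c ^ (β - 1) + (β - 1) * θ) ^ (1 / (β - 1) * (2 - β)) := by
      rw [hE θ, ← Real.rpow_mul (hu θ hθ).le]
    have hexp : (1 : ℝ) / (β - 1) * (2 - β) = 1 / (β - 1) - 1 := by
      field_simp; ring
    have hone : (β - 1) * (1 / (β - 1)) = 1 := by field_simp
    rw [← hEfun, hval, hexp, hone, one_mul]
  -- first derivative of f
  set g : ℝ → ℝ := fun θ => (c + E θ) ^ (α - 2) * (E θ) ^ (2 - β) with hg
  have hfderiv : ∀ θ ∈ Set.Iio D, HasDerivAt f (g θ) θ := by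
    intro θ hθ
    have he := hEpos θ hθ
    have hs := hsum θ hθ
    have hsE : HasDerivAt (fun t => c + E t) ((E θ) ^ (2 - β)) θ :=
      (hEderiv θ hθ).const_add c
    by_cases h1 : α = 1
    · have hffun : f = fun t => Real.log ((c + E t) / c) := by
        funext t; rw [hf t, if_pos h1]
      rw [hffun]
      have hlog : HasDerivAt (fun t => Real.log ((c + E t) / c))
          ((E θ) ^ (2 - β) / c / ((c + E θ) / c)) θ :=
        (hsE.div_const c).log (by positivity)
      convert hlog using 1
      simp only [hg, h1]
      rw [show (1:ℝ) - 2 = -1 by norm_num, Real.rpow_neg_one]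
      field_simp
    · have hffun : f = fun t => ((c + E t) ^ (α - 1) - c ^ (α - 1)) / (α - 1) := by
        funext t; rw [hf t, if_neg h1]
      rw [hffun]
      have hp : HasDerivAt (fun t => (c + E t) ^ (α - 1))
          ((E θ) ^ (2 - β) * (α - 1) * (c + E θ) ^ (α - 1 - 1)) θ :=
        hsE.rpow_const (Or.inl (ne_of_gt hs))
      have hd := (hp.sub_const (c ^ (α - 1))).div_const (α - 1)
      refine hd.congr_deriv ?_
      simp only [hg]
      have hα1 : α - 1 ≠ 0 := fun h => h1 (by linarith)
      rw [show α - 1 - 1 = α - 2 by ring]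
      field_simp
  -- second derivative value
  set h2 : ℝ → ℝ := fun θ =>
      ((α - β) + (2 - β) * c / E θ) * (E θ) ^ (4 - 2 * β) / (c + E θ) ^ (3 - α) with hh2
  have hgderiv : ∀ θ ∈ Set.Iio D, HasDerivAt g (h2 θ) θ := by
    intro θ hθ
    have he := hEpos θ hθ
    have hs := hsum θ hθ
    have hsE : HasDerivAt (fun t => c + E t) ((E θ) ^ (2 - β)) θ :=
      (hEderiv θ hθ).const_add c
    have hA : HasDerivAt (fun t => (c + E t) ^ (α - 2))
        ((E θ) ^ (2 - β) * (α - 2) * (c + E θ) ^ (α - 2 - 1)) θ :=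
      hsE.rpow_const (Or.inl (ne_of_gt hs))
    have hB : HasDerivAt (fun t => (E t) ^ (2 - β))
        ((E θ) ^ (2 - β) * (2 - β) * (E θ) ^ (2 - β - 1)) θ :=
      (hEderiv θ hθ).rpow_const (Or.inl (ne_of_gt he))
    have hAB := hA.mul hB
    refine hAB.congr_deriv ?_
    simp only [hh2]
    exact (stmt_19_aux α β c (E θ) hc he).symm
  -- second derivative of f equals h2 on the open set
  have hkey : ∀ θ ∈ Set.Iio D, deriv (deriv f) θ = h2 θ := by
    intro θ hθ
    have hopen : Set.Iio D ∈ nhds θ := Iio_mem_nhds hθ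
    have heq : deriv f =ᶠ[nhds θ] g := by
      filter_upwards [hopen] with t ht using (hfderiv t ht).deriv
    rw [Filter.EventuallyEq.deriv_eq heq]
    exact (hgderiv θ hθ).deriv
  have hpos : ∀ θ ∈ Set.Iio D, 0 < h2 θ := by
    intro θ hθ
    have he := hEpos θ hθ
    have hs := hsum θ hθ
    simp only [hh2]
    have p1 : 0 < (α - β) + (2 - β) * c / E θ := by
      have : 0 < (2 - β) * c / E θ := div_pos (mul_pos (by linarith) hc) he
      linarith
    have p2 : (0:ℝ) < (E θ) ^ (4 - 2 * β) := Real.rpow_pos_of_pos he _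
    have p3 : (0:ℝ) < (c + E θ) ^ (3 - α) := Real.rpow_pos_of_pos hs _
    exact div_pos (mul_pos p1 p2) p3
  constructor
  · apply strictConvexOn_of_deriv2_pos (convex_Iio D)
    · intro θ hθ
      exact ((hfderiv θ hθ).differentiableAt.continuousAt).continuousWithinAt
    · intro θ hθ
      rw [interior_Iio] at hθ
      have hiter : deriv^[2] f θ = deriv (deriv f) θ := by
        simp [Function.iterate_succ, Function.iterate_zero]
      rw [hiter, hkey θ hθ]
      exact hpos θ hθ
  · intro θ hθ
    refine ⟨hEpos θ hθ, ?_, hpos θ hθ⟩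
    rw [iteratedDeriv_succ, iteratedDeriv_one]
    exact hkey θ hθ
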